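/- arXiv:0705.1690 — 2 statements merged into one kernel-verified Lean document; each statement's English description precedes it below -/
import Mathlib

section
/- There exists a constant C > 0 such that for every irrational x ∈ ℝ: B_1(x) < ∞ if and only if B_0(x) < ∞ and B_0(−x) < ∞; and in that case |B_1(x) − (B_0(x) + B_0(−x))| ≤ C. In other words, the difference between the Brjuno function B_1 and the even part B_0^+(x) = B_0(x) + B_0(−x) of the semi-Brjuno function is bounded. -/
open Set Filter
open scoped ENNReal

/-- The Gauss map `G(t) = 1/t − ⌊1/t⌋`. -/
noncomputable def gmap (t : ℝ) : ℝ := 1 / t - ⌊1 / t⌋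

/-- The Brjuno function `B_1(x) = ∑_{n≥0} β_{n−1}·log(1/x_n) ∈ [0,∞]`, where
`x_0 = x − ⌊x⌋`, `x_{n+1} = G(x_n)` and `β_{n−1} = x_0⋯x_{n−1}` (`β_{-1} = 1`). -/
noncomputable def B1 (x : ℝ) : ℝ≥0∞ :=
  ∑' n : ℕ, ENNReal.ofReal
    ((∏ i ∈ Finset.range n, gmap^[i] (Int.fract x)) * Real.log (1 / (gmap^[n] (Int.fract x))))

/-- The by-excess continued fraction map `A_0(x) = ⌊1/x + 1⌋ − 1/x`. -/
noncomputable def exm (x : ℝ) : ℝ := ⌊1 / x + 1⌋ - 1 / x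

/-- The semi-Brjuno function `B_0(x) = ∑_{n≥0} β*_{n−1}·log(1/y_n) ∈ [0,∞]`, where
`y_0 = x − ⌊x⌋`, `y_{n+1} = A_0(y_n)` and `β*_{n−1} = y_0⋯y_{n−1}` (`β*_{-1} = 1`). -/
noncomputable def B0 (x : ℝ) : ℝ≥0∞ :=
  ∑' n : ℕ, ENNReal.ofReal
    ((∏ i ∈ Finset.range n, exm^[i] (Int.fract x)) * Real.log (1 / (exm^[n] (Int.fract x))))

section BrjunoAux
set_option linter.unusedSectionVars false

def Ok (t : ℝ) : Prop := 0 < t ∧ t < 1 ∧ Irrational t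

lemma gmap_def (t : ℝ) : gmap t = Int.fract (1/t) := rfl

lemma ok_gmap {t : ℝ} (h : Ok t) : Ok (gmap t) := by
  obtain ⟨h0, h1, hirr⟩ := h
  have hinv : Irrational (1/t) := by rw [one_div]; exact hirr.inv
  refine ⟨?_, ?_, ?_⟩
  · rw [gmap_def]; exact Int.fract_pos.mpr (hinv.ne_int _)
  · rw [gmap_def]; exact Int.fract_lt_one _
  · rw [gmap_def, Int.fract]; exact hinv.sub_intCast _

lemma exm_eq (t : ℝ) : exm t = 1 - gmap t := by
  unfold exm gmap
  rw [show (1/t + 1 : ℝ) = 1/t + (1:ℤ) by push_cast; ring, Int.floor_add_intCast]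
  push_cast; ring

lemma ok_one_sub {t : ℝ} (h : Ok t) : Ok (1 - t) := by
  refine ⟨by linarith [h.2.1], by linarith [h.1], ?_⟩
  have := h.2.2.intCast_sub 1
  simpa using this

lemma ok_exm {t : ℝ} (h : Ok t) : Ok (exm t) := by
  rw [exm_eq]; exact ok_one_sub (ok_gmap h)

lemma ok_iter {t : ℝ} (h : Ok t) : ∀ n, Ok (gmap^[n] t) := by
  intro n
  induction n with
  | zero => simpa using h
  | succ n ih => rw [Function.iterate_succ_apply']; exact ok_gmap ih

lemma gmap_two (z : ℝ) : gmap^[2] z = gmap (gmap z) := by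
  rw [show (2:ℕ) = 1+1 from rfl, Function.iterate_add_apply]
  rfl

lemma ne_half {t : ℝ} (h : Ok t) : t ≠ 1/2 := by
  intro he
  exact h.2.2 ⟨(1:ℚ)/2, by rw [he]; push_cast; ring⟩

lemma gmap_of_half {z : ℝ} (h : Ok z) (hz : 1/2 < z) : gmap z = 1/z - 1 := by
  have hfl : ⌊1/z⌋ = 1 := by
    rw [Int.floor_eq_iff]
    constructor
    · push_cast
      exact one_le_one_div h.1 h.2.1.le
    · push_cast
      rw [div_lt_iff₀ h.1]
      linarith
  unfold gmap
  rw [hfl]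
  norm_num

lemma pair_le {t : ℝ} (h : Ok t) : t * gmap t ≤ 1/2 := by
  rcases le_or_gt t (1/2) with hc | hc
  · have h1 : gmap t ≤ 1 := (ok_gmap h).2.1.le
    have h0 : 0 < gmap t := (ok_gmap h).1
    nlinarith [h.1]
  · rw [gmap_of_half h hc]
    have : t * (1/t) = 1 := by field_simp
    nlinarith

lemma ulog {u : ℝ} (h0 : 0 < u) : u * Real.log (1/u) ≤ 1 := by
  have h1 : Real.log (1/u) ≤ 1/u - 1 := Real.log_le_sub_one_of_pos (by positivity)
  have h2 : u * (1/u) = 1 := by field_simp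
  nlinarith

-- series definitions and recursions
noncomputable def tterm (c t : ℝ) (j : ℕ) : ℝ≥0∞ :=
  ENNReal.ofReal ((∏ i ∈ Finset.range (2*j), gmap^[i] t) *
    (gmap^[2*j] t * Real.log (1 / gmap^[2*j+1] t) + c))

noncomputable def Todd (t : ℝ) : ℝ≥0∞ := ∑' j, tterm 0 t j
noncomputable def Rb (t : ℝ) : ℝ≥0∞ := ∑' j, tterm 2 t j
noncomputable def pT (m : ℕ) (t : ℝ) : ℝ≥0∞ := ∑ j ∈ Finset.range m, tterm 0 t j

noncomputable def sterm (t : ℝ) (n : ℕ) : ℝ≥0∞ :=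
  ENNReal.ofReal ((∏ i ∈ Finset.range n, exm^[i] t) * Real.log (1 / exm^[n] t))
noncomputable def Sb (t : ℝ) : ℝ≥0∞ := ∑' n, sterm t n
noncomputable def pS (N : ℕ) (t : ℝ) : ℝ≥0∞ := ∑ n ∈ Finset.range N, sterm t n

noncomputable def bterm (t : ℝ) (n : ℕ) : ℝ≥0∞ :=
  ENNReal.ofReal ((∏ i ∈ Finset.range n, gmap^[i] t) * Real.log (1 / gmap^[n] t))

lemma iter_shift (t : ℝ) (n : ℕ) : gmap^[n+2] t = gmap^[n] (gmap^[2] t) :=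
  Function.iterate_add_apply gmap n 2 t

lemma prod_shift (t : ℝ) (k : ℕ) :
    ∏ i ∈ Finset.range (k+2), gmap^[i] t
      = t * gmap t * ∏ i ∈ Finset.range k, gmap^[i] (gmap^[2] t) := by
  rw [Finset.prod_range_succ', Finset.prod_range_succ']
  simp only [Function.iterate_zero_apply]
  have h1 : ∀ i : ℕ, gmap^[i+1+1] t = gmap^[i] (gmap^[2] t) := fun i => iter_shift t i
  rw [Finset.prod_congr rfl fun i _ => h1 i]
  have : gmap^[0+1] t = gmap t := by rw [Function.iterate_one]
  rw [this]; ring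

lemma tterm_zero (c t : ℝ) : tterm c t 0 = ENNReal.ofReal (t * Real.log (1/gmap t) + c) := by
  unfold tterm
  norm_num [Function.iterate_one]

lemma tterm_succ (c t : ℝ) (j : ℕ) (h : 0 ≤ t * gmap t) :
    tterm c t (j+1) = ENNReal.ofReal (t * gmap t) * tterm c (gmap^[2] t) j := by
  unfold tterm
  rw [show 2*(j+1) = 2*j+2 by ring, show 2*j+2+1 = (2*j+1)+2 by ring,
    prod_shift, iter_shift t (2*j), iter_shift t (2*j+1), ← ENNReal.ofReal_mul h, mul_assoc]

lemma tsum_tterm_rec (c t : ℝ) (h : 0 ≤ t * gmap t) :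
    ∑' j, tterm c t j
      = ENNReal.ofReal (t * Real.log (1/gmap t) + c)
        + ENNReal.ofReal (t * gmap t) * ∑' j, tterm c (gmap^[2] t) j := by
  rw [tsum_eq_zero_add' ENNReal.summable, tterm_zero, ← ENNReal.tsum_mul_left]
  congr 1
  exact tsum_congr fun j => tterm_succ c t j h

lemma pT_rec (m : ℕ) (t : ℝ) (h : 0 ≤ t * gmap t) :
    pT (m+1) t
      = ENNReal.ofReal (t * Real.log (1/gmap t))
        + ENNReal.ofReal (t * gmap t) * pT m (gmap^[2] t) := by
  unfold pT
  rw [Finset.sum_range_succ', tterm_zero, add_zero, Finset.mul_sum, add_comm]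
  congr 1
  exact Finset.sum_congr rfl fun j _ => tterm_succ 0 t j h

lemma sterm_zero (t : ℝ) : sterm t 0 = ENNReal.ofReal (Real.log (1/t)) := by
  unfold sterm; norm_num

lemma sterm_succ (t : ℝ) (n : ℕ) (h : 0 ≤ t) :
    sterm t (n+1) = ENNReal.ofReal t * sterm (exm t) n := by
  unfold sterm
  rw [Finset.prod_range_succ', Function.iterate_zero_apply,
    Function.iterate_succ_apply, ← ENNReal.ofReal_mul h]
  have he : ∀ i : ℕ, exm^[i+1] t = exm^[i] (exm t) := fun i => Function.iterate_succ_apply exm i t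
  rw [Finset.prod_congr rfl fun i _ => he i]
  ring_nf

lemma Sb_rec (t : ℝ) (h : 0 ≤ t) :
    Sb t = ENNReal.ofReal (Real.log (1/t)) + ENNReal.ofReal t * Sb (exm t) := by
  unfold Sb
  rw [tsum_eq_zero_add' ENNReal.summable, sterm_zero, ← ENNReal.tsum_mul_left]
  congr 1
  exact tsum_congr fun n => sterm_succ t n h

lemma pS_rec (N : ℕ) (t : ℝ) (h : 0 ≤ t) :
    pS (N+1) t = ENNReal.ofReal (Real.log (1/t)) + ENNReal.ofReal t * pS N (exm t) := by
  unfold pS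
  rw [Finset.sum_range_succ', sterm_zero, Finset.mul_sum, add_comm]
  congr 1
  exact Finset.sum_congr rfl fun n _ => sterm_succ t n h

lemma Sb_sup (t : ℝ) : Sb t = ⨆ N, pS N t := ENNReal.tsum_eq_iSup_nat
lemma Todd_sup (t : ℝ) : Todd t = ⨆ m, pT m t := ENNReal.tsum_eq_iSup_nat

lemma Rb_rec (t : ℝ) (h : 0 ≤ t * gmap t) :
    Rb t = ENNReal.ofReal (t * Real.log (1/gmap t) + 2)
      + ENNReal.ofReal (t * gmap t) * Rb (gmap^[2] t) := tsum_tterm_rec 2 t h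

-- case analysis lemmas at z vs 1/2
section CaseA
variable {z : ℝ} (h : Ok z) (hz : 1/2 < z)

include h hz in
lemma coefA : 1 - z = z * gmap z := by
  rw [gmap_of_half h hz]
  field_simp

include h hz in
lemma exm_one_sub_A : exm (1 - z) = 1 - gmap (gmap z) := by
  rw [exm_eq]
  congr 1
  have h1z : (0:ℝ) < 1 - z := by linarith [h.2.1]
  have hone : 1 / (1 - z) = 1 / gmap z + 1 := by
    rw [gmap_of_half h hz]
    field_simp
    ring
  rw [gmap_def (1-z), hone, Int.fract_add_one, ← gmap_def]

include h hz in
lemma logA_upper : Real.log (1/(1-z)) ≤ z * Real.log (1/gmap z) + 2 := by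
  have h1z : (0:ℝ) < 1 - z := by linarith [h.2.1]
  have hinv : 1 / gmap z = z / (1 - z) := by
    rw [gmap_of_half h hz]
    rw [show 1/z - 1 = (1-z)/z by rw [sub_div, div_self h.1.ne']]
    rw [one_div_div]
  have hlog : Real.log (1/gmap z) = Real.log z - Real.log (1-z) := by
    rw [hinv, Real.log_div h.1.ne' h1z.ne']
  have e1 : (1 - z) * Real.log (1/(1-z)) ≤ 1 := ulog h1z
  have e2 : z * Real.log (1/z) ≤ 1 := ulog h.1
  have l1 : Real.log (1/(1-z)) = - Real.log (1-z) := by rw [one_div, Real.log_inv]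
  have l2 : Real.log (1/z) = - Real.log z := by rw [one_div, Real.log_inv]
  rw [l1] at e1 ⊢
  rw [l2] at e2
  rw [hlog]
  nlinarith

include h hz in
lemma logA_lower : z * Real.log (1/gmap z) ≤ Real.log (1/(1-z)) := by
  have h1z : (0:ℝ) < 1 - z := by linarith [h.2.1]
  have hinv : 1 / gmap z = z / (1 - z) := by
    rw [gmap_of_half h hz, show 1/z - 1 = (1-z)/z by field_simp, one_div_div]
  have hL0 : 0 ≤ Real.log (1/gmap z) := by
    apply Real.log_nonneg
    exact one_le_one_div (ok_gmap h).1 (ok_gmap h).2.1.le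
  have hle : Real.log (1/gmap z) ≤ Real.log (1/(1-z)) := by
    apply Real.log_le_log (by rw [hinv]; exact div_pos h.1 h1z)
    rw [hinv]
    gcongr
    exact h.2.1.le
  nlinarith [h.1, h.2.1]

end CaseA

section CaseB
variable {z : ℝ} (h : Ok z) (hz : z < 1/2)

include h hz in
lemma ok_hzB : Ok (z / (1 - z)) := by
  have h1z : (0:ℝ) < 1 - z := by linarith [h.2.1]
  refine ⟨div_pos h.1 h1z, ?_, ?_⟩
  · rw [div_lt_one h1z]; linarith
  · have h1 : Irrational (1/z - 1) := by
      have := ((h.2.2.inv).sub_intCast 1)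
      rw [one_div]
      exact_mod_cast this
    have h2 : Irrational (1/z - 1)⁻¹ := h1.inv
    have he : (1/z - 1)⁻¹ = z / (1 - z) := by
      rw [show 1/z - 1 = (1-z)/z by rw [sub_div, div_self h.1.ne']]
      rw [inv_div]
    rwa [he] at h2

include h hz in
lemma coefB : (1 - z) * (z / (1 - z)) = z := by
  have h1z : (0:ℝ) < 1 - z := by linarith [h.2.1]
  field_simp

include h hz in
lemma exm_one_sub_B : exm (1 - z) = 1 - z / (1 - z) := by
  have h1z : (0:ℝ) < 1 - z := by linarith [h.2.1]
  rw [exm_eq]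
  congr 1
  have hfl : ⌊1/(1-z)⌋ = 1 := by
    rw [Int.floor_eq_iff]
    refine ⟨by push_cast; exact one_le_one_div h1z (by linarith [h.1]), ?_⟩
    have h2 : (1:ℝ)/(1-z) < 2 := by
      rw [div_lt_iff₀ h1z]; nlinarith
    push_cast
    linarith
  rw [gmap_def (1-z), Int.fract, hfl]
  push_cast
  rw [eq_div_iff h1z.ne', sub_mul, one_div, inv_mul_cancel₀ h1z.ne']
  ring

include h hz in
lemma gmap_hzB : gmap (z / (1 - z)) = gmap z := by
  have h1z : (0:ℝ) < 1 - z := by linarith [h.2.1]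
  rw [gmap_def, gmap_def]
  have he : 1 / (z / (1-z)) = 1/z - 1 := by
    rw [one_div_div, sub_div, div_self h.1.ne']
  rw [he, show (1:ℝ) = ((1:ℤ):ℝ) by norm_num, Int.fract_sub_intCast]

include h hz in
lemma logB : Real.log (1/(1-z)) ≤ 2 * z := by
  have h1z : (0:ℝ) < 1 - z := by linarith [h.2.1]
  have h1 : Real.log (1/(1-z)) ≤ 1/(1-z) - 1 := Real.log_le_sub_one_of_pos (by positivity)
  have h2 : 1/(1-z) - 1 = z/(1-z) := by field_simp; ring
  have h3 : z/(1-z) ≤ 2*z := by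
    rw [div_le_iff₀ h1z]
    nlinarith [h.1]
  linarith

include h hz in
lemma floor_hzB : ⌊1 / (z / (1 - z))⌋ = ⌊1/z⌋ - 1 := by
  have h1z : (0:ℝ) < 1 - z := by linarith [h.2.1]
  have he : 1 / (z / (1-z)) = 1/z - 1 := by
    rw [one_div_div, sub_div, div_self h.1.ne']
  rw [he, show (1:ℝ) = ((1:ℤ):ℝ) by norm_num, Int.floor_sub_intCast]

include h hz in
lemma floor_z_ge_two : 2 ≤ ⌊1/z⌋ := by
  rw [Int.le_floor]
  push_cast
  rw [le_div_iff₀ h.1]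
  linarith

end CaseB

-- upper induction: pS N (1-z) ≤ Rb z
lemma pS_le_Rb : ∀ N, ∀ z : ℝ, Ok z → pS N (1 - z) ≤ Rb z := by
  intro N
  induction N with
  | zero => intro z hz; simp [pS]
  | succ N ih =>
    intro z hz
    have h1z : (0:ℝ) < 1 - z := by linarith [hz.2.1]
    have hgz := ok_gmap hz
    have hL0 : 0 ≤ Real.log (1/gmap z) :=
      Real.log_nonneg (one_le_one_div hgz.1 hgz.2.1.le)
    have hlog1z : 0 ≤ Real.log (1/(1-z)) :=
      Real.log_nonneg (one_le_one_div h1z (by linarith [hz.1]))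
    have hzz : 0 ≤ z * gmap z := mul_nonneg hz.1.le hgz.1.le
    have hRb : Rb z = ENNReal.ofReal (z * Real.log (1/gmap z) + 2)
        + ENNReal.ofReal (z * gmap z) * Rb (gmap^[2] z) := tsum_tterm_rec 2 z hzz
    rw [pS_rec N (1-z) h1z.le, hRb]
    rcases lt_or_gt_of_ne (ne_half hz) with hc | hc
    · -- z < 1/2
      have hou : Ok (z/(1-z)) := ok_hzB hz hc
      have hgu : gmap (z/(1-z)) = gmap z := gmap_hzB hz hc
      have hg2u : gmap^[2] (z/(1-z)) = gmap^[2] z := by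
        rw [gmap_two, gmap_two, hgu]
      have huz : 0 ≤ (z/(1-z)) * gmap (z/(1-z)) := mul_nonneg hou.1.le (ok_gmap hou).1.le
      have hRu : Rb (z/(1-z)) = ENNReal.ofReal ((z/(1-z)) * Real.log (1/gmap z) + 2)
          + ENNReal.ofReal ((z/(1-z)) * gmap z) * Rb (gmap^[2] z) := by
        rw [Rb_rec (z/(1-z)) huz, hgu, hg2u]
      have hcoef := coefB hz hc
      rw [exm_one_sub_B hz hc]
      calc ENNReal.ofReal (Real.log (1/(1-z)))
            + ENNReal.ofReal (1-z) * pS N (1 - z/(1-z))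
          ≤ ENNReal.ofReal (Real.log (1/(1-z)))
            + ENNReal.ofReal (1-z) * Rb (z/(1-z)) := by
            gcongr
            exact ih (z/(1-z)) hou
        _ = ENNReal.ofReal (Real.log (1/(1-z)))
            + (ENNReal.ofReal (z * Real.log (1/gmap z) + 2*(1-z))
              + ENNReal.ofReal (z * gmap z) * Rb (gmap^[2] z)) := by
            rw [hRu, mul_add, ← ENNReal.ofReal_mul h1z.le, ← mul_assoc,
              ← ENNReal.ofReal_mul h1z.le]
            congr 2
            · rw [show (1-z) * ((z/(1-z)) * Real.log (1/gmap z) + 2)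
                = ((1-z) * (z/(1-z))) * Real.log (1/gmap z) + 2*(1-z) by ring, hcoef]
            · rw [show (1-z) * ((z/(1-z)) * gmap z) = ((1-z) * (z/(1-z))) * gmap z by ring, hcoef]
        _ ≤ ENNReal.ofReal (z * Real.log (1/gmap z) + 2)
            + ENNReal.ofReal (z * gmap z) * Rb (gmap^[2] z) := by
            rw [← add_assoc, ← ENNReal.ofReal_add hlog1z
              (add_nonneg (mul_nonneg hz.1.le hL0) (by linarith))]
            apply add_le_add_left
            apply ENNReal.ofReal_le_ofReal
            have := logB hz hc
            linarith
    · -- 1/2 < z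
      rw [exm_one_sub_A hz hc]
      have hok2 : Ok (gmap (gmap z)) := ok_gmap hgz
      apply add_le_add
      · exact ENNReal.ofReal_le_ofReal (logA_upper hz hc)
      · rw [show ENNReal.ofReal (1-z) = ENNReal.ofReal (z * gmap z) by rw [coefA hz hc],
          show gmap^[2] z = gmap (gmap z) from gmap_two z]
        exact mul_le_mul_right (ih (gmap (gmap z)) hok2) _

lemma Sb_le_Rb {z : ℝ} (hz : Ok z) : Sb (1 - z) ≤ Rb z := by
  rw [Sb_sup]
  exact iSup_le fun N => pS_le_Rb N z hz

-- lower induction: pT m z ≤ Sb (1-z)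
lemma pT_le_Sb : ∀ m, ∀ z : ℝ, Ok z → pT m z ≤ Sb (1 - z) := by
  intro m
  induction m with
  | zero => intro z hz; simp [pT]
  | succ m ih =>
    suffices key : ∀ a : ℕ, ∀ z : ℝ, Ok z → (⌊1/z⌋).toNat = a → pT (m+1) z ≤ Sb (1 - z) by
      intro z hz; exact key _ z hz rfl
    intro a
    induction a using Nat.strong_induction_on with
    | _ a iha =>
      intro z hz hfl
      have h1z : (0:ℝ) < 1 - z := by linarith [hz.2.1]
      have hgz := ok_gmap hz
      have hzz : 0 ≤ z * gmap z := mul_nonneg hz.1.le hgz.1.le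
      have hSb : Sb (1-z) = ENNReal.ofReal (Real.log (1/(1-z)))
          + ENNReal.ofReal (1-z) * Sb (exm (1-z)) := Sb_rec (1-z) h1z.le
      rcases lt_or_gt_of_ne (ne_half hz) with hc | hc
      · -- z < 1/2 : inner induction
        have hou : Ok (z/(1-z)) := ok_hzB hz hc
        have hgu : gmap (z/(1-z)) = gmap z := gmap_hzB hz hc
        have hg2u : gmap^[2] (z/(1-z)) = gmap^[2] z := by rw [gmap_two, gmap_two, hgu]
        have huz : 0 ≤ (z/(1-z)) * gmap (z/(1-z)) := mul_nonneg hou.1.le (ok_gmap hou).1.le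
        have hcoef := coefB hz hc
        have e1 : ENNReal.ofReal (1-z) * ENNReal.ofReal ((z/(1-z)) * Real.log (1/gmap z))
            = ENNReal.ofReal (z * Real.log (1/gmap z)) := by
          rw [← ENNReal.ofReal_mul h1z.le]
          congr 1
          rw [← mul_assoc, hcoef]
        have e2 : ENNReal.ofReal (1-z) * ENNReal.ofReal ((z/(1-z)) * gmap z)
            = ENNReal.ofReal (z * gmap z) := by
          rw [← ENNReal.ofReal_mul h1z.le]
          congr 1
          rw [← mul_assoc, hcoef]
        have spec : pT (m+1) z = ENNReal.ofReal (1-z) * pT (m+1) (z/(1-z)) := by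
          rw [pT_rec m z hzz, pT_rec m (z/(1-z)) huz, hgu, hg2u, mul_add, e1,
            ← mul_assoc, e2]
        have hlt : (⌊1/(z/(1-z))⌋).toNat < a := by
          rw [floor_hzB hz hc]
          have h2 := floor_z_ge_two hz hc
          omega
        have hih : pT (m+1) (z/(1-z)) ≤ Sb (1 - z/(1-z)) := iha _ hlt (z/(1-z)) hou rfl
        calc pT (m+1) z = ENNReal.ofReal (1-z) * pT (m+1) (z/(1-z)) := spec
          _ ≤ ENNReal.ofReal (1-z) * Sb (1 - z/(1-z)) := mul_le_mul_right hih _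
          _ ≤ ENNReal.ofReal (Real.log (1/(1-z)))
              + ENNReal.ofReal (1-z) * Sb (1 - z/(1-z)) := le_add_self
          _ = Sb (1 - z) := by rw [hSb, exm_one_sub_B hz hc]
      · -- 1/2 < z
        rw [hSb, exm_one_sub_A hz hc, pT_rec m z hzz]
        apply add_le_add
        · exact ENNReal.ofReal_le_ofReal (logA_lower hz hc)
        · rw [show ENNReal.ofReal (1-z) = ENNReal.ofReal (z * gmap z) by rw [coefA hz hc],
            show gmap^[2] z = gmap (gmap z) from gmap_two z]
          exact mul_le_mul_right (ih (gmap (gmap z)) (ok_gmap hgz)) _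

lemma Todd_le_Sb {z : ℝ} (hz : Ok z) : Todd z ≤ Sb (1 - z) := by
  rw [Todd_sup]
  exact iSup_le fun m => pT_le_Sb m z hz

lemma prod_nonneg_orbit {t : ℝ} (h : Ok t) (n : ℕ) :
    0 ≤ ∏ i ∈ Finset.range n, gmap^[i] t :=
  Finset.prod_nonneg fun i _ => (ok_iter h i).1.le

lemma prod_le_pow : ∀ j : ℕ, ∀ t : ℝ, Ok t →
    ∏ i ∈ Finset.range (2*j), gmap^[i] t ≤ (2⁻¹:ℝ)^j := by
  intro j
  induction j with
  | zero => intro t h; simp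
  | succ j ih =>
    intro t h
    rw [show 2*(j+1) = 2*j+2 by ring, prod_shift]
    have h2 := ih (gmap^[2] t) (ok_iter h 2)
    have hp := pair_le h
    have hnn : 0 ≤ ∏ i ∈ Finset.range (2*j), gmap^[i] (gmap^[2] t) :=
      prod_nonneg_orbit (ok_iter h 2) _
    have hzz : 0 ≤ t * gmap t := mul_nonneg h.1.le (ok_gmap h).1.le
    calc t * gmap t * ∏ i ∈ Finset.range (2*j), gmap^[i] (gmap^[2] t)
        ≤ (2⁻¹:ℝ) * (2⁻¹:ℝ)^j := by
          apply mul_le_mul (by linarith) h2 hnn (by norm_num)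
      _ = (2⁻¹:ℝ)^(j+1) := by ring

lemma Rb_le_Todd {t : ℝ} (h : Ok t) : Rb t ≤ Todd t + 4 := by
  have hsplit : ∀ j, tterm 2 t j ≤ tterm 0 t j + ENNReal.ofReal (2 * (2⁻¹:ℝ)^j) := by
    intro j
    unfold tterm
    have hP : 0 ≤ ∏ i ∈ Finset.range (2*j), gmap^[i] t := prod_nonneg_orbit h _
    have hX : 0 ≤ gmap^[2*j] t * Real.log (1/gmap^[2*j+1] t) :=
      mul_nonneg (ok_iter h _).1.le
        (Real.log_nonneg (one_le_one_div (ok_iter h _).1 (ok_iter h _).2.1.le))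
    have e : (∏ i ∈ Finset.range (2*j), gmap^[i] t) *
        (gmap^[2*j] t * Real.log (1/gmap^[2*j+1] t) + 2)
        = (∏ i ∈ Finset.range (2*j), gmap^[i] t) *
          (gmap^[2*j] t * Real.log (1/gmap^[2*j+1] t) + 0)
          + 2 * (∏ i ∈ Finset.range (2*j), gmap^[i] t) := by ring
    rw [e, ENNReal.ofReal_add (by nlinarith) (by nlinarith)]
    apply add_le_add_right
    apply ENNReal.ofReal_le_ofReal
    nlinarith [prod_le_pow j t h]
  have hgeom : ∑' j : ℕ, ENNReal.ofReal (2 * (2⁻¹:ℝ)^j) = 4 := by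
    have he : ∀ j : ℕ, ENNReal.ofReal (2 * (2⁻¹:ℝ)^j) = 2 * (2⁻¹:ℝ≥0∞)^j := by
      intro j
      rw [ENNReal.ofReal_mul (by norm_num), ENNReal.ofReal_pow (by norm_num),
        ENNReal.ofReal_inv_of_pos (by norm_num)]
      norm_num
    rw [tsum_congr he, ENNReal.tsum_mul_left, ENNReal.tsum_geometric,
      ENNReal.one_sub_inv_two, inv_inv]
    norm_num
  calc Rb t ≤ ∑' j, (tterm 0 t j + ENNReal.ofReal (2 * (2⁻¹:ℝ)^j)) :=
        ENNReal.tsum_le_tsum hsplit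
    _ = Todd t + ∑' j : ℕ, ENNReal.ofReal (2 * (2⁻¹:ℝ)^j) := ENNReal.tsum_add
    _ = Todd t + 4 := by rw [hgeom]

-- even/odd split of the Brjuno sum
lemma Br_split {t : ℝ} (h : Ok t) :
    ∑' n, bterm t n
      = ENNReal.ofReal (Real.log (1/t))
        + (ENNReal.ofReal t * Todd (gmap t) + Todd t) := by
  rw [← tsum_even_add_odd ENNReal.summable ENNReal.summable]
  have hodd : ∑' k, bterm t (2*k+1) = Todd t := by
    apply tsum_congr
    intro k
    unfold bterm tterm
    rw [Finset.prod_range_succ, add_zero, mul_assoc]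
  have heven : ∑' k, bterm t (2*k) = ENNReal.ofReal (Real.log (1/t))
      + ENNReal.ofReal t * Todd (gmap t) := by
    rw [tsum_eq_zero_add' ENNReal.summable]
    congr 1
    · unfold bterm; norm_num
    · unfold Todd
      rw [← ENNReal.tsum_mul_left]
      apply tsum_congr
      intro k
      unfold bterm tterm
      have he : ∀ i : ℕ, gmap^[i+1] t = gmap^[i] (gmap t) :=
        fun i => Function.iterate_succ_apply gmap i t
      rw [show 2*(k+1) = (2*k+1)+1 by ring, Finset.prod_range_succ',
        Function.iterate_zero_apply, Finset.prod_congr rfl fun i _ => he i,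
        Finset.prod_range_succ, he (2*k+1), ← ENNReal.ofReal_mul h.1.le]
      congr 1
      ring
  rw [hodd, heven, add_assoc]

end BrjunoAux

/-- Theorem 2.14: there is a constant `C > 0` such that for every irrational `x`,
`B_1(x) < ∞` iff both `B_0(x) < ∞` and `B_0(−x) < ∞`, and in that case
`|B_1(x) − (B_0(x) + B_0(−x))| ≤ C`: the difference between the Brjuno function and
the even part `B_0^+(x) = B_0(x) + B_0(−x)` of the semi-Brjuno function is bounded. -/
theorem B1_sub_evenPart_B0_bounded :
    ∃ C : ℝ, 0 < C ∧ ∀ x : ℝ, Irrational x →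
      (B1 x < ⊤ ↔ B0 x < ⊤ ∧ B0 (-x) < ⊤) ∧
      (B1 x < ⊤ → |(B1 x).toReal - ((B0 x).toReal + (B0 (-x)).toReal)| ≤ C) := by
  refine ⟨8, by norm_num, ?_⟩
  intro x hx
  set t := Int.fract x with ht
  have hOk : Ok t := by
    refine ⟨Int.fract_pos.mpr (hx.ne_int _), Int.fract_lt_one x, ?_⟩
    rw [ht, Int.fract]
    exact hx.sub_intCast _
  have hB1 : B1 x = ∑' n, bterm t n := rfl
  have hB0 : B0 x = Sb t := rfl
  have hfneg : Int.fract (-x) = 1 - t := Int.fract_neg hOk.1.ne'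
  have hB0n : B0 (-x) = Sb (1 - t) := by
    rw [show B0 (-x) = Sb (Int.fract (-x)) from rfl, hfneg]
  have hgt : Ok (gmap t) := ok_gmap hOk
  have hSt : Sb t = ENNReal.ofReal (Real.log (1/t))
      + ENNReal.ofReal t * Sb (1 - gmap t) := by
    rw [Sb_rec t hOk.1.le, exm_eq]
  have hup1 : Sb (1 - gmap t) ≤ Todd (gmap t) + 4 := (Sb_le_Rb hgt).trans (Rb_le_Todd hgt)
  have hlo1 : Todd (gmap t) ≤ Sb (1 - gmap t) := Todd_le_Sb hgt
  have hup0 : Sb (1 - t) ≤ Todd t + 4 := (Sb_le_Rb hOk).trans (Rb_le_Todd hOk)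
  have hlo0 : Todd t ≤ Sb (1 - t) := Todd_le_Sb hOk
  have hsplit : B1 x = ENNReal.ofReal (Real.log (1/t))
      + (ENNReal.ofReal t * Todd (gmap t) + Todd t) := by
    rw [hB1, Br_split hOk]
  have hD : B0 x + B0 (-x)
      = (ENNReal.ofReal (Real.log (1/t)) + ENNReal.ofReal t * Sb (1 - gmap t))
        + Sb (1 - t) := by rw [hB0, hB0n, hSt]
  have lower : B1 x ≤ B0 x + B0 (-x) := by
    rw [hsplit, hD]
    calc ENNReal.ofReal (Real.log (1/t)) + (ENNReal.ofReal t * Todd (gmap t) + Todd t)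
        ≤ ENNReal.ofReal (Real.log (1/t))
          + (ENNReal.ofReal t * Sb (1 - gmap t) + Sb (1 - t)) := by gcongr
      _ = (ENNReal.ofReal (Real.log (1/t)) + ENNReal.ofReal t * Sb (1 - gmap t))
          + Sb (1 - t) := by ring
  have upper : B0 x + B0 (-x) ≤ B1 x + 8 := by
    rw [hsplit, hD]
    have ht1 : ENNReal.ofReal t ≤ 1 := ENNReal.ofReal_le_one.mpr hOk.2.1.le
    calc (ENNReal.ofReal (Real.log (1/t)) + ENNReal.ofReal t * Sb (1 - gmap t))
          + Sb (1 - t)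
        ≤ (ENNReal.ofReal (Real.log (1/t)) + ENNReal.ofReal t * (Todd (gmap t) + 4))
          + (Todd t + 4) := by gcongr
      _ = (ENNReal.ofReal (Real.log (1/t)) + (ENNReal.ofReal t * Todd (gmap t) + Todd t))
          + (ENNReal.ofReal t * 4 + 4) := by ring
      _ ≤ (ENNReal.ofReal (Real.log (1/t)) + (ENNReal.ofReal t * Todd (gmap t) + Todd t))
          + (1 * 4 + 4) := by gcongr
      _ = (ENNReal.ofReal (Real.log (1/t)) + (ENNReal.ofReal t * Todd (gmap t) + Todd t))
          + 8 := by norm_num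
  constructor
  · constructor
    · intro hfin
      have hDlt : B0 x + B0 (-x) < ⊤ :=
        upper.trans_lt (ENNReal.add_lt_top.mpr ⟨hfin, by norm_num⟩)
      exact ENNReal.add_lt_top.mp hDlt
    · rintro ⟨h1, h2⟩
      exact lower.trans_lt (ENNReal.add_lt_top.mpr ⟨h1, h2⟩)
  · intro hfin
    have hDlt : B0 x + B0 (-x) < ⊤ :=
      upper.trans_lt (ENNReal.add_lt_top.mpr ⟨hfin, by norm_num⟩)
    obtain ⟨h1, h2⟩ := ENNReal.add_lt_top.mp hDlt
    have hd : (B0 x).toReal + (B0 (-x)).toReal = (B0 x + B0 (-x)).toReal :=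
      (ENNReal.toReal_add h1.ne h2.ne).symm
    have hle1 : (B1 x).toReal ≤ (B0 x + B0 (-x)).toReal :=
      (ENNReal.toReal_le_toReal hfin.ne hDlt.ne).mpr lower
    have hle2 : (B0 x + B0 (-x)).toReal ≤ (B1 x).toReal + 8 := by
      have h8 : (B1 x + 8).toReal = (B1 x).toReal + 8 := by
        rw [ENNReal.toReal_add hfin.ne (by norm_num)]
        norm_num
      have := (ENNReal.toReal_le_toReal hDlt.ne
        (by simp [ENNReal.add_eq_top, hfin.ne] : (B1 x + 8) ≠ ⊤)).mpr upper
      rwa [h8] at this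
    rw [hd, abs_le]
    constructor <;> linarith
end

section
/- There exists an absolute constant C_2 > 0 such that for every irrational x ∈ (0,1), the series Σ_{j=0}^∞ log(a_{2j+1})/q_{2j} (over the odd-indexed regular partial quotients) and the series Σ_{n=0}^∞ log(b_{n+1} − 1)/q*_n (from the by-excess expansion) are simultaneously finite or infinite, and when finite one has | Σ_{j=0}^∞ log(a_{2j+1})/q_{2j} − Σ_{n=0}^∞ log(b_{n+1} − 1)/q*_n | < C_2. -/
open Set Filter

/-- `ra y n = a_{n+1}(y) = ⌊1/G^n(y)⌋`, the regular continued fraction partial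
quotients of `y`. -/
noncomputable def ra (y : ℝ) (n : ℕ) : ℤ := ⌊1 / (gmap^[n] y)⌋

/-- `qcf y (n+1) = q_n`, with `q_{-1} = 0`, `q_0 = 1` and
`q_{n+1} = a_{n+1}·q_n + q_{n−1}`: the denominators of the regular convergents. -/
noncomputable def qcf (y : ℝ) : ℕ → ℤ
  | 0 => 0
  | 1 => 1
  | n + 2 => ra y n * qcf y (n + 1) + qcf y n

/-- `bEx x n = b_{n+1} = ⌊1/A_0^n(x) + 1⌋`, the by-excess digits of `x`. -/
noncomputable def bEx (x : ℝ) (n : ℕ) : ℤ := ⌊1 / (exm^[n] x) + 1⌋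

/-- `qstar x (n+1) = q*_n`, with `q*_{-1} = 0`, `q*_0 = 1` and
`q*_n = b_n·q*_{n−1} − q*_{n−2}`. -/
noncomputable def qstar (x : ℝ) : ℕ → ℤ
  | 0 => 0
  | 1 => 1
  | n + 2 => bEx x n * qstar x (n + 1) - qstar x n

-- basic facts
lemma one_lt_od {y : ℝ} (h : y ∈ Set.Ioo (0:ℝ) 1) : 1 < 1 / y :=
  one_lt_one_div h.1 h.2

lemma floor_lt_self {y : ℝ} (hy : Irrational y) : (⌊y⌋ : ℝ) < y :=
  lt_of_le_of_ne (Int.floor_le y) (fun h => (hy.ne_int ⌊y⌋) h.symm)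

lemma gmap_mem {y : ℝ} (hy : Irrational y) (h : y ∈ Set.Ioo (0:ℝ) 1) :
    gmap y ∈ Set.Ioo (0:ℝ) 1 := by
  have h1 : Irrational (1 / y) := by
    rw [one_div]; exact hy.inv
  have h2 := floor_lt_self h1
  have h3 := Int.lt_floor_add_one (1 / y)
  constructor
  · simp only [gmap]; linarith
  · simp only [gmap]; linarith

lemma gmap_irr {y : ℝ} (hy : Irrational y) : Irrational (gmap y) := by
  have h1 : Irrational (1 / y) := by rw [one_div]; exact hy.inv
  simpa [gmap] using h1.sub_intCast ⌊1 / y⌋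

lemma iter_mem {x : ℝ} (hx : Irrational x) (h : x ∈ Set.Ioo (0:ℝ) 1) (n : ℕ) :
    Irrational (gmap^[n] x) ∧ gmap^[n] x ∈ Set.Ioo (0:ℝ) 1 := by
  induction n with
  | zero => exact ⟨hx, h⟩
  | succ n ih =>
    rw [Function.iterate_succ_apply']
    exact ⟨gmap_irr ih.1, gmap_mem ih.1 ih.2⟩

lemma ra_ge_one {x : ℝ} (hx : Irrational x) (h : x ∈ Set.Ioo (0:ℝ) 1) (n : ℕ) :
    1 ≤ ra x n := by
  have h2 := (iter_mem hx h n).2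
  have : (1:ℝ) < 1 / (gmap^[n] x) := one_lt_od h2
  exact Int.le_floor.2 (by exact_mod_cast this.le)

lemma qcf_mono {x : ℝ} (hx : Irrational x) (h : x ∈ Set.Ioo (0:ℝ) 1) (n : ℕ) :
    0 ≤ qcf x n ∧ qcf x n ≤ qcf x (n + 1) ∧ 1 ≤ qcf x (n + 1) := by
  induction n with
  | zero => simp [qcf]
  | succ n ih =>
    obtain ⟨h0, h1, h2⟩ := ih
    have ha := ra_ge_one hx h n
    have he : qcf x (n + 2) = ra x n * qcf x (n + 1) + qcf x n := rfl
    refine ⟨by linarith, ?_, ?_⟩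
    · rw [he]; nlinarith
    · rw [he]; nlinarith

lemma qcf_pow {x : ℝ} (hx : Irrational x) (h : x ∈ Set.Ioo (0:ℝ) 1) (j : ℕ) :
    (2:ℤ) ^ j ≤ qcf x (2 * j + 1) := by
  induction j with
  | zero => simp [qcf]
  | succ j ih =>
    have e : 2 * (j + 1) + 1 = (2 * j + 1) + 2 := by ring
    rw [e]
    have : qcf x ((2*j+1) + 2) = ra x (2*j+1) * qcf x (2*j+2) + qcf x (2*j+1) := rfl
    rw [this]
    have ha := ra_ge_one hx h (2*j+1)
    obtain ⟨m0, m1, m2⟩ := qcf_mono hx h (2*j+1)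
    have : (2:ℤ)^(j+1) = 2^j + 2^j := by ring
    rw [this]
    nlinarith

-- exm on (0,1): exm y = 1 - gmap y
lemma exm_eq_one_sub_gmap {y : ℝ} (hy : Irrational y) (h : y ∈ Set.Ioo (0:ℝ) 1) :
    exm y = 1 - gmap y := by
  have : (⌊1 / y + 1⌋ : ℝ) = ⌊1 / y⌋ + 1 := by
    rw [show (1 / y + 1 : ℝ) = 1 / y + (1:ℤ) by push_cast; ring, Int.floor_add_intCast]
    push_cast; ring
  simp only [exm, gmap, this]; ring

lemma floor_exm_eq {y : ℝ} (h : y ∈ Set.Ioo (0:ℝ) 1) :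
    ⌊1 / y + 1⌋ = ⌊1 / y⌋ + 1 := by
  rw [show (1 / y + 1 : ℝ) = 1 / y + (1:ℤ) by push_cast; ring, Int.floor_add_intCast]

-- the key single step inside a block of 2's
lemma step2 {w : ℝ} (k : ℕ) (hw0 : 0 < w) (hk : ((k:ℝ) + 2) * w < 1) :
    ⌊1 / (1 - w / (1 - k * w)) + 1⌋ = 2 ∧
      exm (1 - w / (1 - k * w)) = 1 - w / (1 - (k + 1 : ℕ) * w) := by
  have hk0 : 0 < 1 - (k:ℝ) * w := by nlinarith
  have hk1 : 0 < 1 - ((k:ℝ) + 1) * w := by nlinarith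
  have hk2 : 0 < 1 - ((k:ℝ) + 2) * w := by nlinarith
  set z : ℝ := 1 - w / (1 - k * w) with hz
  have hzval : z = (1 - ((k:ℝ)+1) * w) / (1 - (k:ℝ) * w) := by
    rw [hz, eq_div_iff hk0.ne', sub_mul, div_mul_cancel₀ _ hk0.ne']; ring
  have hz0 : 0 < z := by rw [hzval]; positivity
  have hinv : 1 / z = (1 - (k:ℝ) * w) / (1 - ((k:ℝ)+1) * w) := by
    rw [hzval]; rw [one_div_div]
  have h1 : 1 < 1 / z := by
    rw [hinv]
    rw [lt_div_iff₀ hk1]; nlinarith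
  have h2 : 1 / z < 2 := by
    rw [hinv, div_lt_iff₀ hk1]; nlinarith
  have hfl : ⌊1 / z + 1⌋ = 2 := by
    have : ⌊1 / z⌋ = 1 := by
      apply Int.floor_eq_iff.2
      constructor <;> [exact_mod_cast h1.le; exact_mod_cast h2]
    rw [show (1 / z + 1 : ℝ) = 1 / z + (1:ℤ) by push_cast; ring, Int.floor_add_intCast, this]
    rfl
  refine ⟨hfl, ?_⟩
  have : exm z = 2 - 1 / z := by
    simp only [exm, hfl]; push_cast; ring
  rw [this, hinv]
  push_cast
  have hk1' : 1 - ((k:ℝ) + 1) * w ≠ 0 := hk1.ne'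
  have ht : (1 - ((k:ℝ) + 1) * w) * (1 - ((k:ℝ) + 1) * w)⁻¹ = 1 := mul_inv_cancel₀ hk1'
  linear_combination -ht

-- strict floor bound: for irrational w in (0,1), (⌊1/w⌋:ℝ) < 1/w
lemma floor_lt_inv {w : ℝ} (hw : Irrational w) : (⌊1/w⌋ : ℝ) < 1 / w := by
  have h1 : Irrational (1 / w) := by rw [one_div]; exact hw.inv
  exact floor_lt_self h1

-- iterating exm through a block of 2's
lemma kw_lt {w : ℝ} (hw : Irrational w) (hm : w ∈ Set.Ioo (0:ℝ) 1) {k : ℕ}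
    (hk : (k : ℤ) + 2 ≤ ⌊1/w⌋) : ((k:ℝ) + 2) * w < 1 := by
  have h2 := floor_lt_inv hw
  have h1 : ((k:ℝ) + 2) ≤ (⌊1/w⌋ : ℝ) := by exact_mod_cast hk
  have hw0 := hm.1
  have : ((k:ℝ) + 2) < 1 / w := lt_of_le_of_lt h1 h2
  calc ((k:ℝ) + 2) * w < (1/w) * w := by nlinarith
    _ = 1 := by field_simp

lemma block_iter {w : ℝ} (hw : Irrational w) (hm : w ∈ Set.Ioo (0:ℝ) 1) :
    ∀ k : ℕ, (k : ℤ) + 1 ≤ ⌊1/w⌋ → exm^[k] (1 - w) = 1 - w / (1 - k * w) := by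
  intro k
  induction k with
  | zero => intro _; simp
  | succ k ih =>
    intro hk
    have hk' : (k : ℤ) + 1 ≤ ⌊1/w⌋ := by push_cast at hk ⊢; omega
    have hk2 : (k : ℤ) + 2 ≤ ⌊1/w⌋ := by push_cast at hk ⊢; omega
    have hlt := kw_lt hw hm hk2
    rw [Function.iterate_succ_apply', ih hk']
    have := (step2 k hm.1 hlt).2
    rw [this]


-- digit 2 inside a block
lemma block_digit {w : ℝ} (hw : Irrational w) (hm : w ∈ Set.Ioo (0:ℝ) 1) (k : ℕ)
    (hk : (k : ℤ) + 2 ≤ ⌊1/w⌋) :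
    ⌊1 / (exm^[k] (1 - w)) + 1⌋ = 2 := by
  have hk' : (k : ℤ) + 1 ≤ ⌊1/w⌋ := by omega
  rw [block_iter hw hm k hk']
  exact (step2 k hm.1 (kw_lt hw hm hk)).1

-- at the end of a block: exm^[⌊1/w⌋-1] (1-w) = gmap w / (1 + gmap w)
lemma block_end {w : ℝ} (hw : Irrational w) (hm : w ∈ Set.Ioo (0:ℝ) 1) :
    exm^[(⌊1/w⌋ - 1).toNat] (1 - w) = gmap w / (1 + gmap w) := by
  have hc1 : 1 ≤ ⌊1/w⌋ := by
    have := one_lt_od hm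
    exact Int.le_floor.2 (by exact_mod_cast this.le)
  set c : ℕ := (⌊1/w⌋ - 1).toNat with hc
  have hcz : (c : ℤ) = ⌊1/w⌋ - 1 := Int.toNat_of_nonneg (by omega)
  have hk' : (c : ℤ) + 1 ≤ ⌊1/w⌋ := by omega
  rw [block_iter hw hm c hk']
  have hw0 := hm.1
  have hfl := floor_lt_inv hw
  have hfl2 := Int.lt_floor_add_one (1/w)
  -- 1 - c*w = 1 - (⌊1/w⌋-1)*w ; gmap w = 1/w - ⌊1/w⌋
  have hg : gmap w = 1/w - ⌊1/w⌋ := rfl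
  have hwne : w ≠ 0 := ne_of_gt hw0
  have hcw : (c:ℝ) = (⌊1/w⌋:ℝ) - 1 := by exact_mod_cast hcz
  have hden : 1 - (c:ℝ) * w = (1 + gmap w) * w := by
    rw [hcw, hg]; field_simp; ring
  have hpos : 0 < 1 + gmap w := by
    rw [hg]; linarith
  have h2 : w / ((1 + gmap w) * w) = 1 / (1 + gmap w) := by
    rw [mul_comm]
    field_simp
  rw [hden, h2]
  field_simp
  ring

-- big-digit lemma: z = u/(1+u)
lemma big_digit {u : ℝ} (hu : Irrational u) (hm : u ∈ Set.Ioo (0:ℝ) 1) :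
    ⌊1 / (u / (1 + u)) + 1⌋ = ⌊1/u⌋ + 2 ∧
      exm (u / (1 + u)) = 1 - gmap u := by
  have hu0 := hm.1
  have h1u : (0:ℝ) < 1 + u := by linarith
  have hinv : 1 / (u / (1 + u)) = 1/u + 1 := by
    rw [one_div_div]; field_simp
  have hfl : ⌊1 / (u / (1 + u)) + 1⌋ = ⌊1/u⌋ + 2 := by
    rw [hinv, show (1/u + 1 + 1 : ℝ) = 1/u + ((2:ℤ):ℝ) by push_cast; ring, Int.floor_add_intCast]
  refine ⟨hfl, ?_⟩
  have he : exm (u / (1 + u)) = ((⌊1/u⌋:ℝ) + 2) - (1/u + 1) := by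
    rw [exm, hfl, hinv]; push_cast; ring
  rw [he, gmap]
  ring

noncomputable def njf (x : ℝ) : ℕ → ℕ
  | 0 => 0
  | j+1 => njf x j + (ra x (2*j+1)).toNat

lemma qstar_rec (x : ℝ) (n : ℕ) :
    qstar x (n + 2) = bEx x n * qstar x (n + 1) - qstar x n := rfl

lemma qcf_rec (x : ℝ) (n : ℕ) :
    qcf x (n + 2) = ra x n * qcf x (n + 1) + qcf x n := rfl

lemma grand {x : ℝ} (hx : Irrational x) (hm : x ∈ Set.Ioo (0:ℝ) 1) (j : ℕ) :
    exm^[njf x j + 1] x = 1 - gmap^[2*j+1] x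
    ∧ qstar x (njf x j + 1) = qcf x (2*j+1)
    ∧ qstar x (njf x j + 2) = qcf x (2*j+1) + qcf x (2*j+2)
    ∧ bEx x (njf x j) = ra x (2*j) + (if j = 0 then 1 else 2) := by
  induction j with
  | zero =>
    have hb : bEx x 0 = ra x 0 + 1 := by
      simp only [bEx, Function.iterate_zero, id_eq]
      exact floor_exm_eq hm
    refine ⟨?_, ?_, ?_, ?_⟩
    · simp only [njf, Function.iterate_one, Nat.zero_add, Nat.mul_zero]
      exact exm_eq_one_sub_gmap hx hm
    · rfl
    · show qstar x 2 = qcf x 1 + qcf x 2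
      rw [qstar_rec x 0, qcf_rec x 0]
      simp [qstar, qcf, hb]; ring
    · simpa [njf] using hb
  | succ j ih =>
    obtain ⟨hG1, hG2, hG3, _⟩ := ih
    set w : ℝ := gmap^[2*j+1] x with hwdef
    obtain ⟨hwirr, hwmem⟩ := iter_mem hx hm (2*j+1)
    have hra : ra x (2*j+1) = ⌊1/w⌋ := rfl
    have hra1 : 1 ≤ ra x (2*j+1) := ra_ge_one hx hm (2*j+1)
    set c : ℕ := (ra x (2*j+1)).toNat with hcdef
    have hc : (c : ℤ) = ⌊1/w⌋ := by rw [hcdef, Int.toNat_of_nonneg (by omega)]; exact hra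
    have hc1 : 1 ≤ c := by omega
    have hnjs : njf x (j+1) = njf x j + c := rfl
    -- states in the block
    have hstate : ∀ k : ℕ, (k : ℤ) + 1 ≤ ⌊1/w⌋ →
        exm^[njf x j + 1 + k] x = 1 - w / (1 - k * w) := by
      intro k hk
      have : njf x j + 1 + k = k + (njf x j + 1) := by omega
      rw [this, Function.iterate_add_apply, hG1]
      exact block_iter hwirr hwmem k hk
    -- digits in the block
    have hdig : ∀ k : ℕ, (k : ℤ) + 2 ≤ ⌊1/w⌋ → bEx x (njf x j + 1 + k) = 2 := by
      intro k hk
      have h0 : njf x j + 1 + k = k + (njf x j + 1) := by omega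
      show ⌊1 / (exm^[njf x j + 1 + k] x) + 1⌋ = 2
      rw [h0, Function.iterate_add_apply, hG1]
      exact block_digit hwirr hwmem k hk
    -- end of block
    set u : ℝ := gmap w with hudef
    have hueq : u = gmap^[2*j+2] x := by
      rw [hudef, hwdef, ← Function.iterate_succ_apply' gmap (2*j+1) x]
    obtain ⟨huirr, humem⟩ : Irrational u ∧ u ∈ Set.Ioo (0:ℝ) 1 := by
      rw [hueq]; exact iter_mem hx hm (2*j+2)
    have hend : exm^[njf x (j+1)] x = u / (1 + u) := by
      have h0 : njf x (j+1) = (c - 1) + (njf x j + 1) := by omega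
      rw [h0, Function.iterate_add_apply, hG1]
      have h1 : (⌊1/w⌋ - 1).toNat = c - 1 := by omega
      rw [← h1]
      exact block_end hwirr hwmem
    have hbig := big_digit huirr humem
    -- new G1
    have nG1 : exm^[njf x (j+1) + 1] x = 1 - gmap^[2*(j+1)+1] x := by
      rw [Function.iterate_succ_apply', hend, hbig.2]
      have e : 2*(j+1)+1 = (2*j+2)+1 := by ring
      have : gmap^[2*(j+1)+1] x = gmap u := by
        rw [e, Function.iterate_succ_apply', ← hueq]
      rw [this]
    -- new G4
    have hra2 : ra x (2*(j+1)) = ⌊1/u⌋ := by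
      have e : 2*(j+1) = 2*j+2 := by ring
      show (⌊1/(gmap^[2*(j+1)] x)⌋ : ℤ) = ⌊1/u⌋
      rw [e, ← hueq]
    have nG4 : bEx x (njf x (j+1)) = ra x (2*(j+1)) + 2 := by
      show ⌊1 / (exm^[njf x (j+1)] x) + 1⌋ = _
      rw [hend, hbig.1, hra2]
    -- q* along the block
    have D : ∀ k : ℕ,
        (k ≤ c → qstar x (njf x j + 1 + k) = qcf x (2*j+1) + (k:ℤ) * qcf x (2*j+2)) ∧
        (k + 1 ≤ c → qstar x (njf x j + 1 + (k+1)) = qcf x (2*j+1) + ((k:ℤ)+1) * qcf x (2*j+2)) := by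
      intro k
      induction k with
      | zero =>
        constructor
        · intro _; simpa using hG2
        · intro _
          have : njf x j + 1 + 1 = njf x j + 2 := by omega
          rw [this, hG3]; ring
      | succ k ihk =>
        refine ⟨fun hk => by simpa using ihk.2 hk, fun hk => ?_⟩
        have hk1 : k ≤ c := by omega
        have hk2 : k + 1 ≤ c := by omega
        have hd : bEx x (njf x j + 1 + k) = 2 := by
          apply hdig
          omega
        have hrw : njf x j + 1 + (k + 1 + 1) = (njf x j + 1 + k) + 2 := by omega
        rw [hrw, qstar_rec]
        have e1 : njf x j + 1 + k + 1 = njf x j + 1 + (k+1) := by omega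
        rw [e1, ihk.2 hk2, ihk.1 hk1, hd]
        push_cast
        ring
    -- new G2
    have hq3 : qcf x (2*(j+1)+1) = qcf x (2*j+1) + (c:ℤ) * qcf x (2*j+2) := by
      have : 2*(j+1)+1 = (2*j+1) + 2 := by ring
      rw [this, qcf_rec]
      have : (c:ℤ) = ra x (2*j+1) := by omega
      rw [this]; ring
    have nG2 : qstar x (njf x (j+1) + 1) = qcf x (2*(j+1)+1) := by
      have h0 : njf x (j+1) + 1 = njf x j + 1 + c := by omega
      rw [h0, (D c).1 le_rfl, hq3]
    -- new G3
    have nG3 : qstar x (njf x (j+1) + 2) = qcf x (2*(j+1)+1) + qcf x (2*(j+1)+2) := by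
      rw [qstar_rec x (njf x (j+1)), nG4, nG2]
      have h0 : njf x (j+1) = njf x j + 1 + (c - 1) := by omega
      have h1 : qstar x (njf x (j+1)) = qcf x (2*j+1) + ((c:ℤ) - 1) * qcf x (2*j+2) := by
        rw [h0, (D (c-1)).1 (by omega)]
        have : ((c - 1 : ℕ) : ℤ) = (c:ℤ) - 1 := by omega
        rw [this]
      rw [h1]
      have h2 : qcf x (2*(j+1)+2) = ra x (2*(j+1)) * qcf x (2*(j+1)+1) + qcf x (2*(j+1)) := by
        have : 2*(j+1)+2 = (2*(j+1)) + 2 := by ring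
        rw [this, qcf_rec]
      have h3 : qcf x (2*(j+1)) = qcf x (2*j+2) := by
        have e : 2*(j+1) = 2*j+2 := by ring
        rw [e]
      have h4 : qcf x (2*(j+1)+1) = qcf x (2*j+1) + (c:ℤ) * qcf x (2*j+2) := hq3
      rw [h2, h3, h4]
      ring
    exact ⟨nG1, nG2, nG3, by simpa using nG4⟩

lemma gap_digit {x : ℝ} (hx : Irrational x) (hm : x ∈ Set.Ioo (0:ℝ) 1) {j n : ℕ}
    (h1 : njf x j < n) (h2 : n < njf x (j+1)) : bEx x n = 2 := by
  obtain ⟨hG1, -, -, -⟩ := grand hx hm j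
  set w : ℝ := gmap^[2*j+1] x with hwdef
  obtain ⟨hwirr, hwmem⟩ := iter_mem hx hm (2*j+1)
  have hra : ra x (2*j+1) = ⌊1/w⌋ := rfl
  have hra1 : 1 ≤ ra x (2*j+1) := ra_ge_one hx hm (2*j+1)
  set c : ℕ := (ra x (2*j+1)).toNat with hcdef
  have hc : (c : ℤ) = ⌊1/w⌋ := by rw [hcdef, Int.toNat_of_nonneg (by omega)]; exact hra
  have hnjs : njf x (j+1) = njf x j + c := rfl
  set k : ℕ := n - njf x j - 1 with hkdef
  have hn : n = k + (njf x j + 1) := by omega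
  have hk : (k:ℤ) + 2 ≤ ⌊1/w⌋ := by
    rw [← hc]
    have : k + 2 ≤ c := by omega
    exact_mod_cast this
  show ⌊1/(exm^[n] x) + 1⌋ = 2
  rw [hn, Function.iterate_add_apply, hG1]
  exact block_digit hwirr hwmem k hk

lemma njf_lt {x : ℝ} (hx : Irrational x) (hm : x ∈ Set.Ioo (0:ℝ) 1) (j : ℕ) :
    njf x j < njf x (j+1) := by
  have h := ra_ge_one hx hm (2*j+1)
  show njf x j < njf x j + (ra x (2*j+1)).toNat
  omega

lemma cover {x : ℝ} (hx : Irrational x) (hm : x ∈ Set.Ioo (0:ℝ) 1) (n : ℕ) :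
    ∃ j, njf x j ≤ n ∧ n < njf x (j+1) := by
  induction n with
  | zero =>
    refine ⟨0, le_refl _, ?_⟩
    have := njf_lt hx hm 0
    simpa [njf] using this
  | succ n ih =>
    obtain ⟨j, h1, h2⟩ := ih
    by_cases h : n + 1 < njf x (j+1)
    · exact ⟨j, by omega, h⟩
    · refine ⟨j+1, by omega, ?_⟩
      have := njf_lt hx hm (j+1)
      omega


/-- There is an absolute constant `C_2 > 0` such that for every irrational
`x ∈ (0,1)`, the series `∑_{j≥0} log(a_{2j+1})/q_{2j}` (over the odd-indexed regular
partial quotients) and `∑_{n≥0} log(b_{n+1} − 1)/q*_n` (from the by-excess expansion)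
are simultaneously finite or infinite, and when finite their sums differ by less
than `C_2`. -/
theorem odd_log_a_series_close_to_excess_series :
    ∃ C : ℝ, 0 < C ∧ ∀ x : ℝ, Irrational x → x ∈ Set.Ioo (0 : ℝ) 1 →
      ((Summable fun j : ℕ => Real.log (ra x (2 * j) : ℝ) / (qcf x (2 * j + 1) : ℝ)) ↔
        (Summable fun n : ℕ => Real.log ((bEx x n : ℝ) - 1) / (qstar x (n + 1) : ℝ))) ∧
      ((Summable fun j : ℕ => Real.log (ra x (2 * j) : ℝ) / (qcf x (2 * j + 1) : ℝ)) →
        |(∑' j : ℕ, Real.log (ra x (2 * j) : ℝ) / (qcf x (2 * j + 1) : ℝ)) -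
          ∑' n : ℕ, Real.log ((bEx x n : ℝ) - 1) / (qstar x (n + 1) : ℝ)| < C) := by
  refine ⟨3, by norm_num, fun x hx hm => ?_⟩
  set F : ℕ → ℝ := fun j : ℕ => Real.log (ra x (2 * j) : ℝ) / (qcf x (2 * j + 1) : ℝ) with hFdef
  set G : ℕ → ℝ := fun n : ℕ => Real.log ((bEx x n : ℝ) - 1) / (qstar x (n + 1) : ℝ) with hGdef
  -- basic positivity
  have hqR : ∀ j : ℕ, (2:ℝ)^j ≤ (qcf x (2*j+1) : ℝ) := by
    intro j
    have := qcf_pow hx hm j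
    exact_mod_cast this
  have hqpos : ∀ j : ℕ, (0:ℝ) < (qcf x (2*j+1) : ℝ) := fun j =>
    lt_of_lt_of_le (by positivity) (hqR j)
  have haR : ∀ j : ℕ, (1:ℝ) ≤ (ra x (2*j) : ℝ) := by
    intro j
    exact_mod_cast ra_ge_one hx hm (2*j)
  -- value of G at the special indices
  have key : ∀ j : ℕ, G (njf x j) =
      Real.log ((ra x (2*j) : ℝ) + (if j = 0 then 0 else 1)) / (qcf x (2*j+1) : ℝ) := by
    intro j
    obtain ⟨-, hG2, -, hG4⟩ := grand hx hm j
    simp only [hGdef]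
    rw [hG2, hG4]
    congr 2
    push_cast
    split <;> ring
  -- the difference sequence
  set h : ℕ → ℝ := fun j => G (njf x j) - F j with hhdef
  have hbd : ∀ j : ℕ, 0 ≤ h j ∧ h j ≤ Real.log 2 * (1/2)^j := by
    intro j
    have ha := haR j
    have hQ := hqpos j
    have hQ2 := hqR j
    have hd0 : (0:ℝ) ≤ (if j = 0 then (0:ℝ) else 1) := by split <;> norm_num
    have hd1 : (if j = 0 then (0:ℝ) else 1) ≤ 1 := by split <;> norm_num
    have hlogle : Real.log ((ra x (2*j) : ℝ)) ≤
        Real.log ((ra x (2*j) : ℝ) + (if j = 0 then 0 else 1)) :=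
      Real.log_le_log (by linarith) (by linarith)
    have hnum : Real.log ((ra x (2*j) : ℝ) + (if j = 0 then 0 else 1)) -
        Real.log ((ra x (2*j) : ℝ)) ≤ Real.log 2 := by
      have h2a : (ra x (2*j) : ℝ) + (if j = 0 then 0 else 1) ≤ 2 * (ra x (2*j) : ℝ) := by
        linarith
      have := Real.log_le_log (by linarith) h2a
      rw [Real.log_mul (by norm_num) (by linarith)] at this
      linarith
    constructor
    · simp only [hhdef, key j, hFdef]
      rw [div_sub_div_same]
      apply div_nonneg (by linarith) hQ.le
    · simp only [hhdef, key j, hFdef]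
      rw [div_sub_div_same]
      calc (Real.log ((ra x (2*j) : ℝ) + (if j = 0 then 0 else 1)) -
            Real.log ((ra x (2*j) : ℝ))) / (qcf x (2*j+1) : ℝ)
          ≤ Real.log 2 / (qcf x (2*j+1) : ℝ) := by gcongr
          _ ≤ Real.log 2 / (2:ℝ)^j := by
            gcongr

          _ = Real.log 2 * (1/2)^j := by
            rw [div_eq_mul_inv, ← inv_pow]
            norm_num
  -- summability of the difference sequence
  have hh_sum : Summable h :=
    Summable.of_nonneg_of_le (fun j => (hbd j).1) (fun j => (hbd j).2)
      (((summable_geometric_of_lt_one (by norm_num) (by norm_num)).mul_left (Real.log 2)))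
  have hcomp : (G ∘ njf x) = fun j => F j + h j := by
    funext j
    simp only [Function.comp_apply, hhdef]
    ring
  have hinj : Function.Injective (njf x) :=
    (strictMono_nat_of_lt_succ (njf_lt hx hm)).injective
  have hvan : ∀ n ∉ Set.range (njf x), G n = 0 := by
    intro n hn
    obtain ⟨j, h1, h2⟩ := cover hx hm n
    have hne : njf x j ≠ n := fun he => hn ⟨j, he⟩
    have hb2 := gap_digit hx hm (lt_of_le_of_ne h1 hne) h2
    simp only [hGdef, hb2]
    norm_num
  have hGF : Summable (G ∘ njf x) ↔ Summable G := hinj.summable_iff hvan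
  have hiff : Summable F ↔ Summable G := by
    constructor
    · intro hFs
      exact hGF.mp (by rw [hcomp]; exact hFs.add hh_sum)
    · intro hGs
      have h1 := hGF.mpr hGs
      rw [hcomp] at h1
      have h2 := h1.sub hh_sum
      simpa using h2
  refine ⟨hiff, fun hFs => ?_⟩
  have hGnj : Summable (G ∘ njf x) := by rw [hcomp]; exact hFs.add hh_sum
  have hGs : Summable G := hGF.mp hGnj
  have hsupp : Function.support G ⊆ Set.range (njf x) := by
    intro n hn
    by_contra hc
    exact hn (hvan n hc)
  have htsum1 : (∑' j : ℕ, G (njf x j)) = ∑' n : ℕ, G n := hinj.tsum_eq hsupp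
  have htsum2 : (∑' j : ℕ, G (njf x j)) = (∑' j : ℕ, F j) + ∑' j : ℕ, h j := by
    have : (fun j : ℕ => G (njf x j)) = fun j => F j + h j := hcomp
    rw [this, Summable.tsum_add hFs hh_sum]
  have hhs_nonneg : (0:ℝ) ≤ ∑' j : ℕ, h j := tsum_nonneg fun j => (hbd j).1
  have hhs_le : (∑' j : ℕ, h j) ≤ 2 * Real.log 2 := by
    have hmaj := Summable.tsum_le_tsum (fun j => (hbd j).2) hh_sum
      ((summable_geometric_of_lt_one (by norm_num) (by norm_num)).mul_left (Real.log 2))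
    have hgeo : (∑' j : ℕ, Real.log 2 * (1/2:ℝ)^j) = 2 * Real.log 2 := by
      rw [tsum_mul_left, tsum_geometric_of_lt_one (by norm_num) (by norm_num)]
      norm_num; ring
    rw [hgeo] at hmaj
    exact hmaj
  have hlog2 : Real.log 2 ≤ 1 := by
    have := Real.log_le_sub_one_of_pos (by norm_num : (0:ℝ) < 2)
    linarith
  have hdiff : (∑' j : ℕ, F j) - (∑' n : ℕ, G n) = -(∑' j : ℕ, h j) := by
    rw [← htsum1, htsum2]
    ring
  rw [hdiff, abs_neg, abs_of_nonneg hhs_nonneg]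
  linarith
end
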